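/- For the scalar closed-loop vector field f(x) = (1−k)x − 2x²·sgn(x) with k > 1, the function φ(x) = (|x| / (|x| + (k−1)/2))^{1/(k−1)} satisfies φ'(x)·f(x) = −φ(x) for all x ∈ (0, 1], i.e., φ is a Koopman eigenfunction with eigenvalue −1. -/

import Mathlib

/-- For the scalar closed-loop vector field `f(x) = (1-k)x - 2x²` on `(0,1]`
(where `sgn x = 1`) with gain `k > 1`, the function
`φ(x) = (|x| / (|x| + (k-1)/2))^(1/(k-1))` is a Koopman eigenfunction with
eigenvalue `-1`: `φ'(x) · f(x) = -φ(x)` for all `x ∈ (0,1]`. -/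
theorem stmt1 (k : ℝ) (hk : 1 < k) :
    ∀ x ∈ Set.Ioc (0 : ℝ) 1,
      deriv (fun y : ℝ => (|y| / (|y| + (k - 1) / 2)) ^ (1 / (k - 1))) x *
          ((1 - k) * x - 2 * x ^ 2)
        = -((|x| / (|x| + (k - 1) / 2)) ^ (1 / (k - 1))) := by
  intro x hx
  obtain ⟨hx0, hx1⟩ := hx
  set c : ℝ := (k - 1) / 2 with hc
  set α : ℝ := 1 / (k - 1) with hα
  have hk1 : (0 : ℝ) < k - 1 := by linarith
  have hcpos : 0 < c := by positivity
  have hxc : 0 < x + c := by linarith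
  have hupos : 0 < x / (x + c) := div_pos hx0 hxc
  have habs : |x| = x := abs_of_pos hx0
  have heq : (fun y : ℝ => (|y| / (|y| + c)) ^ α)
      =ᶠ[nhds x] (fun y : ℝ => (y / (y + c)) ^ α) := by
    filter_upwards [eventually_gt_nhds hx0] with y hy
    rw [abs_of_pos hy]
  have hu : HasDerivAt (fun y : ℝ => y / (y + c)) (c / (x + c) ^ 2) x := by
    have h1 : HasDerivAt (fun y : ℝ => y) 1 x := hasDerivAt_id x
    have h2 : HasDerivAt (fun y : ℝ => y + c) 1 x := h1.add_const c
    have := h1.div h2 (ne_of_gt hxc)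
    have e : (1 * (x + c) - x * 1) / (x + c) ^ 2 = c / (x + c) ^ 2 := by ring
    rw [e] at this
    exact this
  have hg : HasDerivAt (fun y : ℝ => (y / (y + c)) ^ α)
      (c / (x + c) ^ 2 * α * (x / (x + c)) ^ (α - 1)) x :=
    hu.rpow_const (Or.inl (ne_of_gt hupos))
  rw [heq.deriv_eq, hg.deriv, habs]
  rw [Real.rpow_sub_one (ne_of_gt hupos)]
  have hA : (0 : ℝ) < (x / (x + c)) ^ α := Real.rpow_pos_of_pos hupos α
  rw [hc, hα] at *
  field_simp
  ring
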